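/- If κ ∈ K_{k+1} (the (k+1)-th Garding cone) and κ_i > 0 for some index i, then ∂H_k/∂κ_i(κ) ≤ H_k(κ)/κ_i. -/

import Mathlib

open Finset

/-- The normalized k-th elementary symmetric polynomial `H_k`. -/
noncomputable def nH (n k : ℕ) (κ : Fin n → ℝ) : ℝ :=
  (n.choose k : ℝ)⁻¹ * ∑ s ∈ Finset.univ.powersetCard k, ∏ i ∈ s, κ i

/-- Partial derivative of `f` in the `i`-th variable at `κ`. -/
noncomputable def pd {n : ℕ} (f : (Fin n → ℝ) → ℝ) (i : Fin n) (κ : Fin n → ℝ) : ℝ :=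
  deriv (fun t => f (Function.update κ i t)) (κ i)

/-- The k-th Garding cone `K_k`. -/
def GC (n k : ℕ) : Set (Fin n → ℝ) :=
  {κ | ∀ j : ℕ, 1 ≤ j → j ≤ k → 0 < nH n j κ}

open Polynomial

namespace NewtonAux

open Multiset

lemma esymm_zero' (M : Multiset ℝ) : M.esymm 0 = 1 := by
  simp [Multiset.esymm]

lemma esymm_cons (a : ℝ) (M : Multiset ℝ) (j : ℕ) :
    (a ::ₘ M).esymm (j + 1) = M.esymm (j + 1) + a * M.esymm j := by
  simp only [Multiset.esymm, Multiset.powersetCard_cons, Multiset.map_add, Multiset.sum_add,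
    Multiset.map_map, Function.comp_def, Multiset.prod_cons]
  rw [Multiset.sum_map_mul_left]

lemma esymm_one' (M : Multiset ℝ) : M.esymm 1 = M.sum := by
  simp [Multiset.esymm, Multiset.powersetCard_one, Multiset.map_map, Function.comp_def]

lemma esymm_eq_zero (M : Multiset ℝ) (j : ℕ) (h : Multiset.card M < j) : M.esymm j = 0 := by
  simp [Multiset.esymm, Multiset.powersetCard_eq_empty _ h]

lemma esymm_card (M : Multiset ℝ) : M.esymm (Multiset.card M) = M.prod := by
  induction M using Multiset.induction with
  | empty => simp [esymm_zero']
  | cons a M ih =>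
    rw [Multiset.card_cons, esymm_cons, esymm_eq_zero M _ (by omega), ih, Multiset.prod_cons]
    ring

lemma sq_sum_eq (M : Multiset ℝ) :
    M.sum ^ 2 = (M.map (fun x => x ^ 2)).sum + 2 * M.esymm 2 := by
  induction M using Multiset.induction with
  | empty => simp [esymm_eq_zero 0 2 (by simp)]
  | cons a M ih =>
    rw [Multiset.sum_cons, Multiset.map_cons, Multiset.sum_cons, esymm_cons, esymm_one']
    nlinarith [ih]

lemma cs_ineq (M : Multiset ℝ) :
    M.sum ^ 2 ≤ (Multiset.card M : ℝ) * (M.map (fun x => x ^ 2)).sum := by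
  induction M using Multiset.induction with
  | empty => simp
  | cons a M ih =>
    have hq : (0:ℝ) ≤ (M.map (fun x => x ^ 2)).sum := by
      apply Multiset.sum_nonneg
      intro x hx
      obtain ⟨y, -, rfl⟩ := Multiset.mem_map.mp hx
      positivity
    have hm : (0:ℝ) ≤ (Multiset.card M : ℝ) := Nat.cast_nonneg _
    rw [Multiset.sum_cons, Multiset.map_cons, Multiset.sum_cons, Multiset.card_cons]
    push_cast
    rcases Nat.eq_zero_or_pos (Multiset.card M) with h0 | hpos
    · rw [Multiset.card_eq_zero] at h0
      subst h0
      simp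
    · have mpos : (0:ℝ) < (Multiset.card M : ℝ) := by exact_mod_cast hpos
      set m : ℝ := (Multiset.card M : ℝ)
      set s : ℝ := M.sum
      set q : ℝ := (Multiset.map (fun x => x ^ 2) M).sum
      have key : 0 ≤ m * ((m + 1) * (a ^ 2 + q) - (a + s) ^ 2) := by
        nlinarith [sq_nonneg (a * m - s), mul_nonneg (by linarith : (0:ℝ) ≤ m + 1) (sub_nonneg.mpr ih)]
      nlinarith [le_of_mul_le_mul_left (by linarith [key] : m * 0 ≤ m * ((m + 1) * (a ^ 2 + q) - (a + s) ^ 2)) mpos]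

lemma esymm_inv (M : Multiset ℝ) (h0 : ∀ x ∈ M, x ≠ 0) :
    ∀ i j : ℕ, i + j = Multiset.card M →
      M.esymm i = (M.map (·⁻¹)).esymm j * M.prod := by
  induction M using Multiset.induction with
  | empty =>
    intro i j hij
    simp only [Multiset.card_zero] at hij
    obtain ⟨rfl, rfl⟩ : i = 0 ∧ j = 0 := by omega
    simp [esymm_zero']
  | cons a M ih =>
    intro i j hij
    have ha : a ≠ 0 := h0 a (Multiset.mem_cons_self a M)
    have h0M : ∀ x ∈ M, x ≠ 0 := fun x hx => h0 x (Multiset.mem_cons_of_mem hx)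
    have hP : M.prod ≠ 0 := Multiset.prod_ne_zero (fun h => h0M 0 h rfl)
    rw [Multiset.card_cons] at hij
    have hνcard : Multiset.card (M.map (·⁻¹)) = Multiset.card M := Multiset.card_map _ _
    rw [Multiset.map_cons, Multiset.prod_cons]
    rcases Nat.eq_zero_or_pos i with rfl | hi
    · -- i = 0, j = card M + 1
      have hj' : j = Multiset.card M + 1 := by omega
      subst hj'
      rw [esymm_zero', esymm_cons, esymm_eq_zero _ _ (by rw [hνcard]; omega)]
      have : (M.map (·⁻¹)).esymm (Multiset.card M) = M.prod⁻¹ := by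
        rw [← hνcard, esymm_card, Multiset.prod_map_inv']
      rw [this]
      field_simp
      ring
    rcases Nat.eq_zero_or_pos j with rfl | hj
    · -- j = 0, i = card M + 1
      have hi' : i = Multiset.card M + 1 := by omega
      subst hi'
      rw [esymm_zero', ← Multiset.card_cons a M, esymm_card, Multiset.prod_cons]
      ring
    obtain ⟨i', rfl⟩ : ∃ i', i = i' + 1 := ⟨i - 1, by omega⟩
    obtain ⟨j', rfl⟩ : ∃ j', j = j' + 1 := ⟨j - 1, by omega⟩
    rw [esymm_cons, esymm_cons]
    rw [ih h0M (i' + 1) j' (by omega), ih h0M i' (j' + 1) (by omega)]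
    field_simp
    ring

lemma choose_mul_sub (m jj : ℕ) (h : jj ≤ m) :
    (m - jj) * m.choose jj = m * (m - 1).choose jj := by
  cases m with
  | zero => interval_cases jj; simp
  | succ s =>
    rcases Nat.lt_or_ge jj (s + 1) with hlt | hge
    · have h1 : (s + 1) * s.choose jj = (s + 1).choose (jj + 1) * (jj + 1) :=
        (Nat.add_one_mul_choose_eq s jj)
      have h2 : (s + 1).choose (jj + 1) * (jj + 1) = (s + 1).choose jj * (s + 1 - jj) :=
        Nat.choose_succ_right_eq (s + 1) jj
      simp only [Nat.add_sub_cancel]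
      calc (s + 1 - jj) * (s + 1).choose jj = (s + 1).choose jj * (s + 1 - jj) := mul_comm _ _
        _ = (s + 1).choose (jj + 1) * (jj + 1) := h2.symm
        _ = (s + 1) * s.choose jj := h1.symm
    · have hjj : jj = s + 1 := by omega
      subst hjj
      simp [Nat.choose_eq_zero_of_lt (by omega : s < s + 1)]

lemma choose_real_sub (m jj : ℕ) (h : jj ≤ m) :
    ((m : ℝ) - jj) * (m.choose jj : ℝ) = (m : ℝ) * ((m - 1).choose jj : ℝ) := by
  have := choose_mul_sub m jj h
  have hc : ((m - jj : ℕ) : ℝ) = (m : ℝ) - jj := by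
    push_cast [Nat.cast_sub h]; ring
  calc ((m : ℝ) - jj) * (m.choose jj : ℝ) = (((m - jj) * m.choose jj : ℕ) : ℝ) := by
        push_cast [hc]; ring
    _ = ((m * (m - 1).choose jj : ℕ) : ℝ) := by rw [this]
    _ = (m : ℝ) * ((m - 1).choose jj : ℝ) := by push_cast; ring

lemma choose_log_concave (m j : ℕ) :
    m.choose j * m.choose (j + 2) ≤ m.choose (j + 1) ^ 2 := by
  have h1 : m.choose (j + 1) * (j + 1) = m.choose j * (m - j) := Nat.choose_succ_right_eq m j
  have h2 : m.choose (j + 2) * (j + 2) = m.choose (j + 1) * (m - (j + 1)) :=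
    Nat.choose_succ_right_eq m (j + 1)
  have key : m.choose j * m.choose (j + 2) * ((j + 1) * (j + 2)) ≤
      m.choose (j + 1) ^ 2 * ((j + 1) * (j + 2)) := by
    have e1 : m.choose j * m.choose (j + 2) * ((j + 1) * (j + 2)) =
        m.choose j * (j + 1) * (m.choose (j + 2) * (j + 2)) := by ring
    have e2 : m.choose (j + 1) ^ 2 * ((j + 1) * (j + 2)) =
        (m.choose (j + 1) * (j + 1)) * (m.choose (j + 1) * (j + 2)) := by ring
    rw [e1, e2, h2, h1]
    have : m.choose j * (j + 1) * (m.choose (j + 1) * (m - (j + 1))) =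
        (m.choose j * m.choose (j + 1)) * ((j + 1) * (m - (j + 1))) := by ring
    rw [this]
    have : m.choose j * (m - j) * (m.choose (j + 1) * (j + 2)) =
        (m.choose j * m.choose (j + 1)) * ((m - j) * (j + 2)) := by ring
    rw [this]
    refine Nat.mul_le_mul_left _ ?_
    calc (j + 1) * (m - (j + 1)) ≤ (j + 2) * (m - j) := Nat.mul_le_mul (by omega) (by omega)
      _ = (m - j) * (j + 2) := mul_comm _ _
  exact Nat.le_of_mul_le_mul_right key (Nat.mul_pos (by omega) (by omega))

/-- Rolle step: the roots of the derivative of `∏ (X - a)` over `M` form a multiset `ν` with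
`card ν = card M - 1` and `m * e_j(ν) = (m - j) * e_j(M)`. -/
lemma exists_deriv_roots (M : Multiset ℝ) (hm : 1 ≤ Multiset.card M) :
    ∃ ν : Multiset ℝ, Multiset.card ν = Multiset.card M - 1 ∧
      ∀ jj : ℕ, jj ≤ Multiset.card M - 1 →
        (Multiset.card M : ℝ) * ν.esymm jj = ((Multiset.card M : ℝ) - jj) * M.esymm jj := by
  set m := Multiset.card M with hmdef
  set p : Polynomial ℝ := (M.map fun a => X - C a).prod with hp
  have hmon : p.Monic := monic_multiset_prod_of_monic _ _ (fun a _ => monic_X_sub_C a)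
  have hdeg : p.natDegree = m := natDegree_multiset_prod_X_sub_C_eq_card M
  have hroots : p.roots = M := roots_multiset_prod_X_sub_C M
  set q : Polynomial ℝ := derivative p with hq
  have hq1 : q.coeff (m - 1) = (m : ℝ) := by
    rw [hq, coeff_derivative]
    have : m - 1 + 1 = m := by omega
    rw [this]
    rw [show p.coeff m = 1 from hdeg ▸ hmon.coeff_natDegree]
    have : ((m - 1 : ℕ) : ℝ) + 1 = (m : ℝ) := by
      push_cast [Nat.cast_sub hm]; ring
    rw [this, one_mul]
  have hmne : (m : ℝ) ≠ 0 := by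
    simp only [ne_eq, Nat.cast_eq_zero]; omega
  have hqdeg : q.natDegree = m - 1 := by
    have hub : q.natDegree < m := by
      have h := natDegree_derivative_lt (p := p) (by omega : p.natDegree ≠ 0)
      rw [← hq] at h
      omega
    have hlb : m - 1 ≤ q.natDegree := le_natDegree_of_ne_zero (by rw [hq1]; exact hmne)
    omega
  have hlead : q.leadingCoeff = (m : ℝ) := by
    rw [Polynomial.leadingCoeff, hqdeg, hq1]
  have hcard : Multiset.card q.roots = m - 1 := by
    have hub : Multiset.card q.roots ≤ m - 1 := hqdeg ▸ q.card_roots'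
    have hlb := p.card_roots_le_derivative
    rw [hroots, ← hq] at hlb
    omega
  refine ⟨q.roots, hcard, fun jj hjj => ?_⟩
  have e1 : q.coeff (m - 1 - jj) = (m : ℝ) * (-1) ^ jj * q.roots.esymm jj := by
    have := Polynomial.coeff_eq_esymm_roots_of_card (hcard.trans hqdeg.symm)
      (show m - 1 - jj ≤ q.natDegree by omega)
    rw [hlead, hqdeg] at this
    rw [Nat.sub_sub_self hjj] at this
    exact this
  have e2 : q.coeff (m - 1 - jj) = ((m : ℝ) - jj) * ((-1) ^ jj * M.esymm jj) := by
    rw [hq, coeff_derivative]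
    have harg : m - 1 - jj + 1 = m - jj := by omega
    rw [harg]
    have e3 : p.coeff (m - jj) = (-1) ^ jj * M.esymm jj := by
      have := Multiset.prod_X_sub_C_coeff M (show m - jj ≤ Multiset.card M by omega)
      rw [← hmdef] at this
      rw [Nat.sub_sub_self (by omega : jj ≤ m)] at this
      exact this
    rw [e3]
    have : ((m - 1 - jj : ℕ) : ℝ) + 1 = (m : ℝ) - jj := by
      have h1 : ((m - 1 - jj : ℕ) : ℝ) = ((m : ℝ) - 1) - jj := by
        rw [Nat.cast_sub (show jj ≤ m - 1 by omega), Nat.cast_sub hm]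
        norm_num
      rw [h1]; ring
    rw [this]
    ring
  have heq := e1.symm.trans e2
  have hpow : ((-1 : ℝ) ^ jj) ≠ 0 := pow_ne_zero _ (by norm_num)
  have h2 : ((m : ℝ) * q.roots.esymm jj) * ((-1 : ℝ) ^ jj) =
      (((m : ℝ) - jj) * M.esymm jj) * ((-1 : ℝ) ^ jj) := by
    linear_combination heq
  exact mul_right_cancel₀ hpow h2

/-- Newton's inequality for elementary symmetric polynomials of real numbers. -/
theorem newton : ∀ (m : ℕ) (M : Multiset ℝ), Multiset.card M = m → ∀ j : ℕ, j + 2 ≤ m →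
    M.esymm j * M.esymm (j + 2) * (m.choose (j + 1) : ℝ) ^ 2 ≤
      (M.esymm (j + 1)) ^ 2 * ((m.choose j : ℝ) * (m.choose (j + 2) : ℝ)) := by
  intro m
  induction m using Nat.strong_induction_on with
  | _ m IH =>
    intro M hM j hj
    rcases Nat.lt_or_ge (j + 2) m with hlt | hge
    · -- inductive step via Rolle
      obtain ⟨ν, hνc, key⟩ := exists_deriv_roots M (by omega)
      rw [hM] at hνc key
      have ihineq := IH (m - 1) (by omega) ν hνc j (by omega)
      have keyA : (m : ℝ) * ν.esymm j = ((m : ℝ) - j) * M.esymm j := key j (by omega)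
      have keyB : (m : ℝ) * ν.esymm (j + 1) = ((m : ℝ) - ((j : ℝ) + 1)) * M.esymm (j + 1) := by
        have := key (j + 1) (by omega); push_cast at this; exact this
      have keyD : (m : ℝ) * ν.esymm (j + 2) = ((m : ℝ) - ((j : ℝ) + 2)) * M.esymm (j + 2) := by
        have := key (j + 2) (by omega); push_cast at this; exact this
      have hch0 : (m : ℝ) * ((m - 1).choose j : ℝ) = ((m : ℝ) - j) * (m.choose j : ℝ) :=
        (choose_real_sub m j (by omega)).symm
      have hch1 : (m : ℝ) * ((m - 1).choose (j + 1) : ℝ) =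
          ((m : ℝ) - ((j : ℝ) + 1)) * (m.choose (j + 1) : ℝ) := by
        have := (choose_real_sub m (j + 1) (by omega)).symm
        push_cast at this; exact this
      have hch2 : (m : ℝ) * ((m - 1).choose (j + 2) : ℝ) =
          ((m : ℝ) - ((j : ℝ) + 2)) * (m.choose (j + 2) : ℝ) := by
        have := (choose_real_sub m (j + 2) (by omega)).symm
        push_cast at this; exact this
      set a : ℝ := (m : ℝ) - j with ha
      set b : ℝ := (m : ℝ) - ((j : ℝ) + 1) with hb
      set c : ℝ := (m : ℝ) - ((j : ℝ) + 2) with hc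
      have hcpos : (0 : ℝ) < c := by
        rw [hc]
        have : ((j : ℝ) + 2) < (m : ℝ) := by exact_mod_cast hlt
        linarith
      have hbpos : (0 : ℝ) < b := by rw [hb]; rw [hc] at hcpos; linarith
      have hapos : (0 : ℝ) < a := by rw [ha]; rw [hc] at hcpos; linarith
      have h4 := mul_le_mul_of_nonneg_left ihineq
        (by positivity : (0 : ℝ) ≤ (m : ℝ) ^ 4)
      have eL : (m : ℝ) ^ 4 * (ν.esymm j * ν.esymm (j + 2) * ((m - 1).choose (j + 1) : ℝ) ^ 2) =
          (a * M.esymm j) * (c * M.esymm (j + 2)) * (b * (m.choose (j + 1) : ℝ)) ^ 2 := by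
        calc (m : ℝ) ^ 4 * (ν.esymm j * ν.esymm (j + 2) * ((m - 1).choose (j + 1) : ℝ) ^ 2)
            = ((m : ℝ) * ν.esymm j) * ((m : ℝ) * ν.esymm (j + 2)) *
              ((m : ℝ) * ((m - 1).choose (j + 1) : ℝ)) ^ 2 := by ring
          _ = (a * M.esymm j) * (c * M.esymm (j + 2)) * (b * (m.choose (j + 1) : ℝ)) ^ 2 := by
              rw [keyA, keyD, hch1]
      have eR : (m : ℝ) ^ 4 * ((ν.esymm (j + 1)) ^ 2 *
            (((m - 1).choose j : ℝ) * ((m - 1).choose (j + 2) : ℝ))) =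
          (b * M.esymm (j + 1)) ^ 2 * ((a * (m.choose j : ℝ)) * (c * (m.choose (j + 2) : ℝ))) := by
        calc (m : ℝ) ^ 4 * ((ν.esymm (j + 1)) ^ 2 *
              (((m - 1).choose j : ℝ) * ((m - 1).choose (j + 2) : ℝ)))
            = ((m : ℝ) * ν.esymm (j + 1)) ^ 2 * (((m : ℝ) * ((m - 1).choose j : ℝ)) *
              ((m : ℝ) * ((m - 1).choose (j + 2) : ℝ))) := by ring
          _ = (b * M.esymm (j + 1)) ^ 2 *
              ((a * (m.choose j : ℝ)) * (c * (m.choose (j + 2) : ℝ))) := by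
              rw [keyB, hch0, hch2]
      rw [eL, eR] at h4
      have habc : (0 : ℝ) < a * b ^ 2 * c := by positivity
      refine le_of_mul_le_mul_left ?_ habc
      calc (a * b ^ 2 * c) * (M.esymm j * M.esymm (j + 2) * (m.choose (j + 1) : ℝ) ^ 2)
          = (a * M.esymm j) * (c * M.esymm (j + 2)) * (b * (m.choose (j + 1) : ℝ)) ^ 2 := by ring
        _ ≤ (b * M.esymm (j + 1)) ^ 2 *
            ((a * (m.choose j : ℝ)) * (c * (m.choose (j + 2) : ℝ))) := h4
        _ = (a * b ^ 2 * c) *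
            ((M.esymm (j + 1)) ^ 2 * ((m.choose j : ℝ) * (m.choose (j + 2) : ℝ))) := by ring
    · -- base case : m = j + 2
      have hmeq : m = j + 2 := by omega
      subst hmeq
      have hC2 : ((j + 2).choose (j + 2) : ℝ) = 1 := by simp
      have hC1 : ((j + 2).choose (j + 1) : ℝ) = (j : ℝ) + 2 := by
        rw [show j + 2 = (j + 1) + 1 from rfl, Nat.choose_succ_self_right]
        push_cast; ring
      have hC0 : 2 * ((j + 2).choose j : ℝ) = ((j : ℝ) + 2) * ((j : ℝ) + 1) := by
        have hnat : (j + 2).choose (j + 1) * (j + 1) = (j + 2).choose j * (j + 2 - j) :=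
          Nat.choose_succ_right_eq (j + 2) j
        rw [show j + 2 - j = 2 from by omega] at hnat
        have : ((j + 2).choose (j + 1) * (j + 1) : ℕ) = ((j + 2).choose j * 2 : ℕ) := hnat
        have hcast : ((j + 2).choose (j + 1) : ℝ) * ((j : ℝ) + 1) = ((j + 2).choose j : ℝ) * 2 := by
          exact_mod_cast this
        rw [hC1] at hcast
        linarith
      by_cases hP : M.prod = 0
      · have hD : M.esymm (j + 2) = 0 := by
          rw [show j + 2 = Multiset.card M from hM.symm, esymm_card, hP]
        rw [hD]
        have hz : M.esymm j * 0 * ((j + 2).choose (j + 1) : ℝ) ^ 2 = 0 := by ring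
        rw [hz]
        positivity
      · have h0 : ∀ x ∈ M, x ≠ 0 := fun x hx hx0 => hP (Multiset.prod_eq_zero (hx0 ▸ hx))
        have hA : M.esymm j = (M.map (·⁻¹)).esymm 2 * M.prod := esymm_inv M h0 j 2 (by omega)
        have hB : M.esymm (j + 1) = (M.map (·⁻¹)).esymm 1 * M.prod :=
          esymm_inv M h0 (j + 1) 1 (by omega)
        have hD : M.esymm (j + 2) = (M.map (·⁻¹)).esymm 0 * M.prod :=
          esymm_inv M h0 (j + 2) 0 (by omega)
        set ν := M.map (·⁻¹) with hν
        have hνc : Multiset.card ν = j + 2 := by rw [hν, Multiset.card_map, hM]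
        rw [hA, hB, hD, esymm_zero', esymm_one', hC1, hC2]
        set s : ℝ := ν.sum with hs
        set e2 : ℝ := ν.esymm 2 with he2
        set P : ℝ := M.prod with hPd
        set Q : ℝ := (ν.map (fun x => x ^ 2)).sum with hQ
        have hSQ : s ^ 2 = Q + 2 * e2 := sq_sum_eq ν
        have hCS : s ^ 2 ≤ ((j : ℝ) + 2) * Q := by
          have := cs_ineq ν
          rw [hνc] at this
          push_cast at this
          exact this
        have hPP : (0 : ℝ) < P ^ 2 := by
          have := pow_ne_zero 2 hP
          exact lt_of_le_of_ne (sq_nonneg P) (Ne.symm this)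
        have key : 2 * e2 * ((j : ℝ) + 2) ≤ s ^ 2 * ((j : ℝ) + 1) := by
          have hQ' : Q = s ^ 2 - 2 * e2 := by linarith
          rw [hQ'] at hCS
          nlinarith [hCS]
        have hfin : (2 * e2 * ((j : ℝ) + 2)) * (((j : ℝ) + 2) * P ^ 2) ≤
            (s ^ 2 * ((j : ℝ) + 1)) * (((j : ℝ) + 2) * P ^ 2) :=
          mul_le_mul_of_nonneg_right key (by positivity)
        have hgl : (e2 * P) * (1 * P) * ((j : ℝ) + 2) ^ 2 * 2 =
            (2 * e2 * ((j : ℝ) + 2)) * (((j : ℝ) + 2) * P ^ 2) := by ring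
        have hgr : (s * P) ^ 2 * (((j + 2).choose j : ℝ) * 1) * 2 =
            (s ^ 2 * ((j : ℝ) + 1)) * (((j : ℝ) + 2) * P ^ 2) := by
          linear_combination (s ^ 2 * P ^ 2) * hC0
        linarith [hfin]

lemma sum_split {n : ℕ} (κ : Fin n → ℝ) (i : Fin n) (j : ℕ) :
    ∑ s ∈ Finset.univ.powersetCard (j + 1), ∏ t ∈ s, κ t =
      ((Finset.univ.erase i).val.map κ).esymm (j + 1) +
        κ i * ((Finset.univ.erase i).val.map κ).esymm j := by
  rw [Finset.esymm_map_val, Finset.esymm_map_val]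
  have hu : (Finset.univ : Finset (Fin n)) = insert i (Finset.univ.erase i) :=
    (Finset.insert_erase (Finset.mem_univ i)).symm
  have hni : i ∉ Finset.univ.erase i := Finset.notMem_erase i _
  have hnotmem : ∀ m : ℕ, ∀ s ∈ (Finset.univ.erase i).powersetCard m, i ∉ s := by
    intro m s hs hmem
    exact (Finset.mem_erase.mp ((Finset.mem_powersetCard.mp hs).1 hmem)).1 rfl
  have hdisj : Disjoint ((Finset.univ.erase i).powersetCard (j + 1))
      (((Finset.univ.erase i).powersetCard j).image (insert i)) := by
    rw [Finset.disjoint_left]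
    intro s hs hs'
    obtain ⟨t, ht, rfl⟩ := Finset.mem_image.mp hs'
    exact hnotmem (j + 1) _ hs (Finset.mem_insert_self i t)
  have hinj : ∀ x ∈ (Finset.univ.erase i).powersetCard j,
      ∀ y ∈ (Finset.univ.erase i).powersetCard j, insert i x = insert i y → x = y := by
    intro x hx y hy hxy
    have h1 : x = (insert i x).erase i := (Finset.erase_insert (hnotmem j x hx)).symm
    have h2 : y = (insert i y).erase i := (Finset.erase_insert (hnotmem j y hy)).symm
    rw [h1, h2, hxy]
  conv_lhs => rw [hu, Finset.powersetCard_succ_insert hni]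
  rw [Finset.sum_union hdisj]
  congr 1
  rw [Finset.sum_image hinj, Finset.mul_sum]
  exact Finset.sum_congr rfl fun s hs => Finset.prod_insert (hnotmem j s hs)

lemma nH_val {n : ℕ} (j : ℕ) (i : Fin n) (κ : Fin n → ℝ) :
    nH n (j + 1) κ = (n.choose (j + 1) : ℝ)⁻¹ *
      (((Finset.univ.erase i).val.map κ).esymm (j + 1) +
        κ i * ((Finset.univ.erase i).val.map κ).esymm j) := by
  rw [nH, sum_split κ i j]

lemma pd_nH {n : ℕ} (j : ℕ) (i : Fin n) (κ : Fin n → ℝ) :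
    pd (nH n (j + 1)) i κ =
      (n.choose (j + 1) : ℝ)⁻¹ * ((Finset.univ.erase i).val.map κ).esymm j := by
  have hmap : ∀ t : ℝ, (Finset.univ.erase i).val.map (Function.update κ i t) =
      (Finset.univ.erase i).val.map κ := by
    intro t
    apply Multiset.map_congr rfl
    intro x hx
    have hxi : x ≠ i := (Finset.mem_erase.mp (Finset.mem_val.mp hx)).1
    exact Function.update_of_ne hxi _ _
  have hfun : (fun t : ℝ => nH n (j + 1) (Function.update κ i t)) =
      fun t : ℝ => (n.choose (j + 1) : ℝ)⁻¹ *
        (((Finset.univ.erase i).val.map κ).esymm (j + 1) +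
          t * ((Finset.univ.erase i).val.map κ).esymm j) := by
    funext t
    rw [nH_val j i (Function.update κ i t), hmap t, Function.update_self]
  rw [pd, hfun]
  have hD : HasDerivAt (fun t : ℝ => (n.choose (j + 1) : ℝ)⁻¹ *
      (((Finset.univ.erase i).val.map κ).esymm (j + 1) +
        t * ((Finset.univ.erase i).val.map κ).esymm j))
      ((n.choose (j + 1) : ℝ)⁻¹ * ((Finset.univ.erase i).val.map κ).esymm j) (κ i) := by
    simpa using (((hasDerivAt_id (κ i)).mul_const
      (((Finset.univ.erase i).val.map κ).esymm j)).const_add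
      (((Finset.univ.erase i).val.map κ).esymm (j + 1))).const_mul (n.choose (j + 1) : ℝ)⁻¹
  exact hD.deriv

end NewtonAux

open NewtonAux

theorem stmt3 (n k : ℕ) (hn : 2 ≤ n) (hk1 : 1 ≤ k) (hk2 : k ≤ n - 1)
    (κ : Fin n → ℝ) (hκ : κ ∈ GC n (k + 1)) (i : Fin n) (hi : 0 < κ i) :
    pd (nH n k) i κ ≤ nH n k κ / κ i := by
  obtain ⟨j0, rfl⟩ : ∃ j0, k = j0 + 1 := ⟨k - 1, by omega⟩
  set Mf : Multiset ℝ := (Finset.univ.erase i).val.map κ with hMfdef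
  have hMc : Multiset.card Mf = n - 1 := by
    rw [hMfdef, Multiset.card_map]
    have : (Finset.univ.erase i).card = n - 1 := by
      rw [Finset.card_erase_of_mem (Finset.mem_univ i), Finset.card_univ, Fintype.card_fin]
    exact this
  have hchoosepos : ∀ j : ℕ, j ≤ n → (0 : ℝ) < (n.choose j : ℝ) := by
    intro j hj
    exact_mod_cast Nat.choose_pos hj
  have hsum : ∀ j : ℕ, j + 1 ≤ (j0 + 1) + 1 → 0 < Mf.esymm (j + 1) + κ i * Mf.esymm j := by
    intro j hj
    have h := hκ (j + 1) (by omega) (by omega)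
    rw [nH_val j i κ] at h
    have cpos := hchoosepos (j + 1) (by omega)
    have := mul_pos cpos h
    rwa [mul_inv_cancel_left₀ (ne_of_gt cpos)] at this
  have hb1 : 0 < Mf.esymm (j0 + 1) + κ i * Mf.esymm j0 := hsum j0 (by omega)
  have hb2 : 0 < Mf.esymm (j0 + 2) + κ i * Mf.esymm (j0 + 1) := hsum (j0 + 1) (by omega)
  have hEk : 0 ≤ Mf.esymm (j0 + 1) := by
    by_cases hc : j0 + 2 = n
    · have hz : Mf.esymm (j0 + 2) = 0 := esymm_eq_zero Mf _ (by omega)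
      rw [hz] at hb2
      have hpos : 0 < κ i * Mf.esymm (j0 + 1) := by linarith
      rcases mul_pos_iff.mp hpos with ⟨-, h⟩ | ⟨h', -⟩
      · exact h.le
      · linarith
    · by_contra hneg
      push_neg at hneg
      have hA : 0 < Mf.esymm j0 := by
        have hpos : 0 < κ i * Mf.esymm j0 := by linarith
        rcases mul_pos_iff.mp hpos with ⟨-, h⟩ | ⟨h', -⟩
        · exact h
        · linarith
      have hD : 0 < Mf.esymm (j0 + 2) := by
        have : κ i * Mf.esymm (j0 + 1) < 0 := mul_neg_of_pos_of_neg hi hneg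
        linarith
      have h1 : -Mf.esymm (j0 + 1) < κ i * Mf.esymm j0 := by linarith
      have h2 : -(κ i * Mf.esymm (j0 + 1)) < Mf.esymm (j0 + 2) := by linarith
      have h3 : (0 : ℝ) < -Mf.esymm (j0 + 1) := neg_pos.mpr hneg
      have h4 : (0 : ℝ) < -(κ i * Mf.esymm (j0 + 1)) := by
        have he : -(κ i * Mf.esymm (j0 + 1)) = κ i * (-Mf.esymm (j0 + 1)) := by ring
        rw [he]
        exact mul_pos hi h3
      have h5 : (-Mf.esymm (j0 + 1)) * (-(κ i * Mf.esymm (j0 + 1))) <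
          (κ i * Mf.esymm j0) * Mf.esymm (j0 + 2) := mul_lt_mul'' h1 h2 h3.le h4.le
      have h6 : κ i * (Mf.esymm (j0 + 1)) ^ 2 < κ i * (Mf.esymm j0 * Mf.esymm (j0 + 2)) := by
        calc κ i * (Mf.esymm (j0 + 1)) ^ 2
            = (-Mf.esymm (j0 + 1)) * (-(κ i * Mf.esymm (j0 + 1))) := by ring
          _ < (κ i * Mf.esymm j0) * Mf.esymm (j0 + 2) := h5
          _ = κ i * (Mf.esymm j0 * Mf.esymm (j0 + 2)) := by ring
      have hprod : (Mf.esymm (j0 + 1)) ^ 2 < Mf.esymm j0 * Mf.esymm (j0 + 2) :=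
        lt_of_mul_lt_mul_left h6 hi.le
      have hN := newton (n - 1) Mf hMc j0 (by omega)
      have hLC : ((n - 1).choose j0 : ℝ) * ((n - 1).choose (j0 + 2) : ℝ) ≤
          ((n - 1).choose (j0 + 1) : ℝ) ^ 2 := by
        have := choose_log_concave (n - 1) j0
        exact_mod_cast this
      have hCpos : (0 : ℝ) < ((n - 1).choose (j0 + 1) : ℝ) ^ 2 := by
        have h := Nat.choose_pos (show j0 + 1 ≤ n - 1 by omega)
        have h' : (0 : ℝ) < ((n - 1).choose (j0 + 1) : ℝ) := by exact_mod_cast h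
        positivity
      linarith [hN, mul_le_mul_of_nonneg_left hLC (sq_nonneg (Mf.esymm (j0 + 1))),
        mul_lt_mul_of_pos_right hprod hCpos]
  have hpd := pd_nH j0 i κ
  have hval := nH_val j0 i κ
  rw [hpd, hval, le_div_iff₀ hi]
  have cpos : (0 : ℝ) < (n.choose (j0 + 1) : ℝ)⁻¹ :=
    inv_pos.mpr (hchoosepos (j0 + 1) (by omega))
  have hnn : 0 ≤ (n.choose (j0 + 1) : ℝ)⁻¹ * Mf.esymm (j0 + 1) := mul_nonneg cpos.le hEk
  nlinarith [hnn]
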